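/- Let 1 ≤ k ≤ n, let X_n be a subspace of (ℂ^d)^{⊗n} of dimension d_{X_n} and Y_k a subspace of (ℂ^d)^{⊗k} of dimension d_{Y_k}, with orthogonal projections Π_{X_n}, Π_{Y_k} and maximally mixed states π_{X_n} := Π_{X_n}/d_{X_n}, π_{Y_k} := Π_{Y_k}/d_{Y_k}. Define C_{k→n}(ω) := (d_{Y_k}/d_{X_n})·Π_{X_n}(Π_{Y_k} ω Π_{Y_k} ⊗ I^{⊗(n−k)})Π_{X_n} and P_{n→k}(ω) := Π_{Y_k} tr_{n−k}[Π_{X_n} ω Π_{X_n}] Π_{Y_k}. Let ω be a state on (ℂ^d)^{⊗n} whose support is contained in X_n and such that the partial trace tr_{n−k}[ω] over the last n−k factors is supported in Y_k. Then D(ω‖π_{X_n}) ≥ D(P_{n→k}(ω)‖π_{Y_k}) + D(ω‖(C_{k→n}∘P_{n→k})(ω)). -/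

import Mathlib

open scoped BigOperators Matrix Kronecker ComplexOrder
open Matrix

noncomputable section

variable {ι : Type*} [Fintype ι] [DecidableEq ι]

/-- Apply a real-scalar function to a Hermitian matrix via the spectral decomposition
(junk value `0` on non-Hermitian matrices). -/
def hermFun (f : ℝ → ℂ) (A : Matrix ι ι ℂ) : Matrix ι ι ℂ :=
  if hA : A.IsHermitian then
    (hA.eigenvectorUnitary : Matrix ι ι ℂ) * Matrix.diagonal (fun i => f (hA.eigenvalues i)) *
      (star (hA.eigenvectorUnitary : Matrix ι ι ℂ))
  else 0

/-- Matrix logarithm (on the support; natural logarithm). -/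
def matLog (A : Matrix ι ι ℂ) : Matrix ι ι ℂ := hermFun (fun x => (Real.log x : ℂ)) A

/-- Matrix square root of a Hermitian (e.g. positive semidefinite) matrix. -/
def matSqrt (A : Matrix ι ι ℂ) : Matrix ι ι ℂ := hermFun (fun x => (Real.sqrt x : ℂ)) A

/-- Complex matrix power with the Moore–Penrose convention (inverse powers taken on the support). -/
def matCPow (A : Matrix ι ι ℂ) (z : ℂ) : Matrix ι ι ℂ :=
  hermFun (fun x => if x = 0 then 0 else (x : ℂ) ^ z) A

/-- A state (density operator). -/
def IsState (ρ : Matrix ι ι ℂ) : Prop := ρ.PosSemidef ∧ ρ.trace = 1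

/-- Quantum relative entropy `D(ρ‖σ) = tr[ρ (log ρ - log σ)]`. -/
def relEnt (ρ σ : Matrix ι ι ℂ) : ℝ := ((ρ * (matLog ρ - matLog σ)).trace).re

/-- von Neumann entropy `H(ρ) = -tr[ρ log ρ]`. -/
def vnEntropy (ρ : Matrix ι ι ℂ) : ℝ := -((ρ * matLog ρ).trace).re

/-- Trace norm `‖X‖₁ = tr √(X† X)`. -/
def traceNorm (X : Matrix ι ι ℂ) : ℝ := ((matSqrt (Xᴴ * X)).trace).re

/-- Fidelity `F(ρ,σ) = ‖√ρ √σ‖₁²`. -/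
def fidelity (ρ σ : Matrix ι ι ℂ) : ℝ := (traceNorm (matSqrt ρ * matSqrt σ)) ^ 2

variable {A B : Type*} [Fintype A] [DecidableEq A] [Fintype B] [DecidableEq B]

/-- The extension `Λ ⊗ id_m` of a map on matrices. -/
def extendChan (Λ : Matrix A A ℂ →ₗ[ℂ] Matrix B B ℂ) {m : Type*} [Fintype m]
    (M : Matrix (A × m) (A × m) ℂ) : Matrix (B × m) (B × m) ℂ :=
  fun p q => Λ (fun a a' => M (a, p.2) (a', q.2)) p.1 q.1

/-- A quantum channel: a completely positive trace-preserving linear map. -/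
structure IsQChannel (Λ : Matrix A A ℂ →ₗ[ℂ] Matrix B B ℂ) : Prop where
  tp : ∀ M, (Λ M).trace = M.trace
  cp : ∀ (m : ℕ) (M : Matrix (A × Fin m) (A × Fin m) ℂ), M.PosSemidef →
    (extendChan Λ M).PosSemidef

/-- The marginal of a state of `n` systems on the `j`-th system. -/
def marginal {n : ℕ} (ρ : Matrix (Fin n → ι) (Fin n → ι) ℂ) (j : Fin n) :
    Matrix ι ι ℂ :=
  fun a b => ∑ f : {i : Fin n // i ≠ j} → ι,
      ρ (fun i => if h : i = j then a else f ⟨i, h⟩)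
        (fun i => if h : i = j then b else f ⟨i, h⟩)

/-- `n`-fold tensor power of a matrix. -/
def tpow (σ : Matrix ι ι ℂ) (n : ℕ) : Matrix (Fin n → ι) (Fin n → ι) ℂ :=
  fun f g => ∏ i, σ (f i) (g i)

/-- Partial trace over the last `n - k` tensor factors. -/
def ptraceLast {n k : ℕ} (h : k ≤ n) (ρ : Matrix (Fin n → ι) (Fin n → ι) ℂ) :
    Matrix (Fin k → ι) (Fin k → ι) ℂ :=
  fun a b => ∑ z : Fin (n - k) → ι,
    ρ (fun i => if h' : (i : ℕ) < k then a ⟨i, h'⟩ else z ⟨(i : ℕ) - k, by have := i.isLt; omega⟩)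
      (fun i => if h' : (i : ℕ) < k then b ⟨i, h'⟩ else z ⟨(i : ℕ) - k, by have := i.isLt; omega⟩)

/-- Permutation matrix acting on `(ℂ^d)^{⊗ n}`. -/
def permMat (d n : ℕ) (π : Equiv.Perm (Fin n)) :
    Matrix (Fin n → Fin d) (Fin n → Fin d) ℂ :=
  fun f g => if g = f ∘ π then 1 else 0

/-- Orthogonal projection onto the symmetric subspace of `(ℂ^d)^{⊗ n}`. -/
def symProj (d n : ℕ) : Matrix (Fin n → Fin d) (Fin n → Fin d) ℂ :=
  ((n.factorial : ℂ))⁻¹ • ∑ π : Equiv.Perm (Fin n), permMat d n π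

/-- Dimension `d[n] = C(d+n-1, n)` of the symmetric subspace. -/
def dsym (d n : ℕ) : ℕ := (d + n - 1).choose n

/-- Maximally mixed state on the symmetric subspace. -/
def piSym (d n : ℕ) : Matrix (Fin n → Fin d) (Fin n → Fin d) ℂ :=
  ((dsym d n : ℂ))⁻¹ • symProj d n

/-- Tensoring a matrix on the first `k` factors with the identity on the last `n-k` factors. -/
def extendId {d k n : ℕ} (h : k ≤ n) (M : Matrix (Fin k → Fin d) (Fin k → Fin d) ℂ) :
    Matrix (Fin n → Fin d) (Fin n → Fin d) ℂ :=
  fun f g => (if ∀ i : Fin n, k ≤ (i : ℕ) → f i = g i then 1 else 0) *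
    M (fun i => f (Fin.castLE h i)) (fun i => g (Fin.castLE h i))

/-- The universal quantum cloning machine `C_{k→n}`. -/
def uqcm (d : ℕ) {k n : ℕ} (h : k ≤ n) (ω : Matrix (Fin k → Fin d) (Fin k → Fin d) ℂ) :
    Matrix (Fin n → Fin d) (Fin n → Fin d) ℂ :=
  (((dsym d k : ℂ)) / ((dsym d n : ℂ))) •
    (symProj d n * extendId h (symProj d k * ω * symProj d k) * symProj d n)

/-- The symmetrized partial trace channel `P_{n→k}`. -/
def symPTrace (d : ℕ) {k n : ℕ} (h : k ≤ n) (ω : Matrix (Fin n → Fin d) (Fin n → Fin d) ℂ) :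
    Matrix (Fin k → Fin d) (Fin k → Fin d) ℂ :=
  symProj d k * ptraceLast h (symProj d n * ω * symProj d n) * symProj d k

/-- Orthogonal projection onto the antisymmetric subspace of `(ℂ^d)^{⊗ n}`. -/
def antiProj (d n : ℕ) : Matrix (Fin n → Fin d) (Fin n → Fin d) ℂ :=
  ((n.factorial : ℂ))⁻¹ • ∑ π : Equiv.Perm (Fin n), ((Equiv.Perm.sign π : ℤ) : ℂ) • permMat d n π

/-- Maximally mixed state on the antisymmetric subspace. -/
def piAnti (d n : ℕ) : Matrix (Fin n → Fin d) (Fin n → Fin d) ℂ :=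
  ((d.choose n : ℂ))⁻¹ • antiProj d n

/-- The antisymmetric cloning machine. -/
def antiClone (d : ℕ) {k n : ℕ} (h : k ≤ n) (ω : Matrix (Fin k → Fin d) (Fin k → Fin d) ℂ) :
    Matrix (Fin n → Fin d) (Fin n → Fin d) ℂ :=
  (((d.choose k : ℂ)) / ((d.choose n : ℂ))) •
    (antiProj d n * extendId h (antiProj d k * ω * antiProj d k) * antiProj d n)

/-- The antisymmetrized partial trace. -/
def antiPTrace (d : ℕ) {k n : ℕ} (h : k ≤ n) (ω : Matrix (Fin n → Fin d) (Fin n → Fin d) ℂ) :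
    Matrix (Fin k → Fin d) (Fin k → Fin d) ℂ :=
  antiProj d k * ptraceLast h (antiProj d n * ω * antiProj d n) * antiProj d k

/-- Rank-one projection (outer product) `|v⟩⟨v|`. -/
def outer {α : Type*} (v : α → ℂ) : Matrix α α ℂ :=
  fun x y => v x * (starRingEnd ℂ) (v y)

/-- Slater determinant vector `φ₁ ∧ ⋯ ∧ φ_k`. -/
def slater {d k : ℕ} (w : Fin k → (Fin d → ℂ)) : (Fin k → Fin d) → ℂ :=
  fun f => ((Real.sqrt k.factorial : ℂ))⁻¹ *
    ∑ π : Equiv.Perm (Fin k), ((Equiv.Perm.sign π : ℤ) : ℂ) * ∏ i, w (π i) (f i)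

/-- Partial trace over the second tensor factor. -/
def trB {ιA ιB : Type*} [Fintype ιB] (ρ : Matrix (ιA × ιB) (ιA × ιB) ℂ) : Matrix ιA ιA ℂ :=
  fun a a' => ∑ b, ρ (a, b) (a', b)

/-- Partial trace over the first tensor factor. -/
def trA {ιA ιB : Type*} [Fintype ιA] (ρ : Matrix (ιA × ιB) (ιA × ιB) ℂ) : Matrix ιB ιB ℂ :=
  fun b b' => ∑ a, ρ (a, b) (a, b')

/-- The probability density `β(t) = (π/2)(1 + cosh(π t))⁻¹`. -/
def betaDens (t : ℝ) : ℝ := (Real.pi / 2) * (1 + Real.cosh (Real.pi * t))⁻¹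

/-- Rotated Petz recovery map `R^t_{A,X}`, mapping operators on `B` to operators on `A ⊗ B`. -/
def petzA {ιA ιB : Type*} [Fintype ιA] [DecidableEq ιA] [Fintype ιB] [DecidableEq ιB]
    (t : ℝ) (X : Matrix (ιA × ιB) (ιA × ιB) ℂ) (Y : Matrix ιB ιB ℂ) :
    Matrix (ιA × ιB) (ιA × ιB) ℂ :=
  matCPow X ((1 + t * Complex.I) / 2) *
    ((1 : Matrix ιA ιA ℂ) ⊗ₖ
      (matCPow (trA X) (-(1 + t * Complex.I) / 2) * Y * matCPow (trA X) (-(1 - t * Complex.I) / 2))) *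
    matCPow X ((1 - t * Complex.I) / 2)

/-- Rotated Petz recovery map `R^t_{B,X}`, mapping operators on `A` to operators on `A ⊗ B`. -/
def petzB {ιA ιB : Type*} [Fintype ιA] [DecidableEq ιA] [Fintype ιB] [DecidableEq ιB]
    (t : ℝ) (X : Matrix (ιA × ιB) (ιA × ιB) ℂ) (Y : Matrix ιA ιA ℂ) :
    Matrix (ιA × ιB) (ιA × ιB) ℂ :=
  matCPow X ((1 + t * Complex.I) / 2) *
    ((matCPow (trB X) (-(1 + t * Complex.I) / 2) * Y * matCPow (trB X) (-(1 - t * Complex.I) / 2)) ⊗ₖ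
      (1 : Matrix ιB ιB ℂ)) *
    matCPow X ((1 - t * Complex.I) / 2)

/-- Cloning map between two general subspaces, given by their orthogonal projections. -/
def genClone {d k n : ℕ} (h : k ≤ n) (dX dY : ℕ)
    (PX : Matrix (Fin n → Fin d) (Fin n → Fin d) ℂ)
    (PY : Matrix (Fin k → Fin d) (Fin k → Fin d) ℂ)
    (ω : Matrix (Fin k → Fin d) (Fin k → Fin d) ℂ) :
    Matrix (Fin n → Fin d) (Fin n → Fin d) ℂ :=
  (((dY : ℂ)) / ((dX : ℂ))) • (PX * extendId h (PY * ω * PY) * PX)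

/-- Partial trace channel between two general subspaces. -/
def genPTrace {d k n : ℕ} (h : k ≤ n)
    (PX : Matrix (Fin n → Fin d) (Fin n → Fin d) ℂ)
    (PY : Matrix (Fin k → Fin d) (Fin k → Fin d) ℂ)
    (ω : Matrix (Fin n → Fin d) (Fin n → Fin d) ℂ) :
    Matrix (Fin k → Fin d) (Fin k → Fin d) ℂ :=
  PY * ptraceLast h (PX * ω * PX) * PY

end

section GSCScalar
open Filter

private lemma gsc_div_tendsto_zero (c : ℝ) : Tendsto (fun T : ℝ => c / T) atTop (nhds 0) := by
  simpa [div_eq_mul_inv] using tendsto_inv_atTop_zero.const_mul c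

private lemma gsc_log_shift_tendsto (c : ℝ) (hc : 0 ≤ c) :
    Tendsto (fun T : ℝ => Real.log (c + T) - Real.log (1 + T)) atTop (nhds 0) := by
  have h1 : Tendsto (fun T : ℝ => (c + T) / (1 + T)) atTop (nhds 1) := by
    have heq : (fun T : ℝ => (c + T) / (1 + T)) =ᶠ[atTop]
        (fun T : ℝ => (c / T + 1) / (1 / T + 1)) := by
      filter_upwards [eventually_gt_atTop 0] with T hT
      have hT' : T ≠ 0 := hT.ne'
      have hT2 : (1 : ℝ) + T ≠ 0 := by positivity
      field_simp
    rw [tendsto_congr' heq]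
    have hc' : Tendsto (fun T : ℝ => c / T + 1) atTop (nhds 1) := by
      simpa using (gsc_div_tendsto_zero c).add (tendsto_const_nhds (x := (1:ℝ)))
    have hd' : Tendsto (fun T : ℝ => 1 / T + 1) atTop (nhds 1) := by
      simpa using (gsc_div_tendsto_zero 1).add (tendsto_const_nhds (x := (1:ℝ)))
    simpa [Pi.div_def] using hc'.div hd' one_ne_zero
  have h2 : Tendsto (fun T : ℝ => Real.log ((c + T) / (1 + T))) atTop (nhds 0) := by
    have := (Real.continuousAt_log one_ne_zero).tendsto.comp h1
    simpa [Function.comp_def] using this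
  refine h2.congr' ?_
  filter_upwards [eventually_gt_atTop 0] with T hT
  rw [Real.log_div (by positivity) (by positivity)]

/-- The key scalar comparison lemma. -/
private lemma gsc_scalar_key {ι₁ ι₂ : Type*} [Fintype ι₁] [Fintype ι₂]
    (lam : ι₁ → ℝ) (w : ι₁ → ℝ) (mu : ι₂ → ℝ) (s : ι₂ → ℝ)
    (hlam : ∀ i, 0 ≤ lam i)
    (hmu : ∀ j, 0 ≤ mu j)
    (hlam0 : ∀ i, lam i = 0 → w i = 0) (hmu0 : ∀ j, mu j = 0 → s j = 0)
    (hsum : ∑ i, w i = ∑ j, s j)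
    (hcomp : ∀ t : ℝ, 0 < t → ∑ i, w i / (lam i + t) ≤ ∑ j, s j / (mu j + t)) :
    ∑ j, s j * Real.log (mu j) ≤ ∑ i, w i * Real.log (lam i) := by
  set φ : ℝ → ℝ := fun T => (∑ j, s j * Real.log (mu j + T)) - ∑ i, w i * Real.log (lam i + T)
    with hφ
  -- derivative
  have hderiv : ∀ T ∈ Set.Ioi (0:ℝ), HasDerivAt φ
      ((∑ j, s j / (mu j + T)) - ∑ i, w i / (lam i + T)) T := by
    intro T hT
    have hT' : (0:ℝ) < T := hT
    have h1 : HasDerivAt (fun T => ∑ j, s j * Real.log (mu j + T))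
        (∑ j, s j / (mu j + T)) T := by
      refine HasDerivAt.fun_sum fun j _ => ?_
      have hpos : mu j + T ≠ 0 := by have := hmu j; positivity
      have := ((Real.hasDerivAt_log hpos).comp T ((hasDerivAt_id T).const_add (mu j))).const_mul (s j)
      simpa [div_eq_mul_inv, mul_comm, mul_assoc] using this
    have h2 : HasDerivAt (fun T => ∑ i, w i * Real.log (lam i + T))
        (∑ i, w i / (lam i + T)) T := by
      refine HasDerivAt.fun_sum fun i _ => ?_
      have hpos : lam i + T ≠ 0 := by have := hlam i; positivity
      have := ((Real.hasDerivAt_log hpos).comp T ((hasDerivAt_id T).const_add (lam i))).const_mul (w i)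
      simpa [div_eq_mul_inv, mul_comm, mul_assoc] using this
    exact h1.sub h2
  -- monotone on Ioi 0
  have hmono : MonotoneOn φ (Set.Ioi (0:ℝ)) := by
    refine monotoneOn_of_deriv_nonneg (convex_Ioi 0) ?_ ?_ ?_
    · intro T hT
      exact (hderiv T hT).continuousAt.continuousWithinAt
    · intro T hT
      rw [interior_Ioi] at hT
      exact (hderiv T hT).differentiableAt.differentiableWithinAt
    · intro T hT
      rw [interior_Ioi] at hT
      rw [(hderiv T hT).deriv]
      have := hcomp T hT
      linarith
  -- tendsto at top
  have htop : Tendsto φ atTop (nhds 0) := by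
    have heq : φ =ᶠ[atTop] fun T =>
        (∑ j, s j * (Real.log (mu j + T) - Real.log (1 + T)))
          - ∑ i, w i * (Real.log (lam i + T) - Real.log (1 + T)) := by
      filter_upwards with T
      simp only [hφ, mul_sub, Finset.sum_sub_distrib, ← Finset.sum_mul]
      rw [hsum]; ring
    rw [tendsto_congr' heq]
    have h1 : Tendsto (fun T => ∑ j, s j * (Real.log (mu j + T) - Real.log (1 + T)))
        atTop (nhds 0) := by
      have := tendsto_finset_sum (Finset.univ : Finset ι₂)
        (fun j _ => (gsc_log_shift_tendsto (mu j) (hmu j)).const_mul (s j))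
      simpa using this
    have h2 : Tendsto (fun T => ∑ i, w i * (Real.log (lam i + T) - Real.log (1 + T)))
        atTop (nhds 0) := by
      have := tendsto_finset_sum (Finset.univ : Finset ι₁)
        (fun i _ => (gsc_log_shift_tendsto (lam i) (hlam i)).const_mul (w i))
      simpa using this
    simpa using h1.sub h2
  -- φ ≤ 0 on Ioi 0
  have hneg : ∀ T : ℝ, 0 < T → φ T ≤ 0 := by
    intro T hT
    refine ge_of_tendsto htop ?_
    filter_upwards [eventually_ge_atTop T] with T' hT'
    exact hmono hT (lt_of_lt_of_le hT hT') hT'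
  -- tendsto at 0+
  have hzero : Tendsto φ (nhdsWithin 0 (Set.Ioi 0))
      (nhds ((∑ j, s j * Real.log (mu j)) - ∑ i, w i * Real.log (lam i))) := by
    refine Tendsto.sub ?_ ?_
    · refine tendsto_finset_sum _ fun j _ => ?_
      rcases eq_or_lt_of_le (hmu j) with h | h
      · have hz : s j = 0 := hmu0 j h.symm
        simpa [hz] using tendsto_const_nhds
      · have : Tendsto (fun T : ℝ => Real.log (mu j + T)) (nhdsWithin 0 (Set.Ioi 0))
            (nhds (Real.log (mu j))) := by
          have hc : ContinuousAt (fun T : ℝ => Real.log (mu j + T)) 0 := by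
            have : ContinuousAt (fun T : ℝ => mu j + T) 0 := by fun_prop
            exact (Real.continuousAt_log (by simpa using h.ne')).comp this |>.congr (by rfl)
          simpa using hc.continuousWithinAt.tendsto
        exact this.const_mul (s j)
    · refine tendsto_finset_sum _ fun i _ => ?_
      rcases eq_or_lt_of_le (hlam i) with h | h
      · have hz : w i = 0 := hlam0 i h.symm
        simpa [hz] using tendsto_const_nhds
      · have hc : ContinuousAt (fun T : ℝ => Real.log (lam i + T)) 0 := by
          have hcc : ContinuousAt (fun T : ℝ => lam i + T) 0 := by fun_prop
          exact (Real.continuousAt_log (by simpa using h.ne')).comp hcc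
        have : Tendsto (fun T : ℝ => Real.log (lam i + T)) (nhdsWithin 0 (Set.Ioi 0))
            (nhds (Real.log (lam i))) := by simpa using hc.continuousWithinAt.tendsto
        exact this.const_mul (w i)
  -- conclude
  have : (∑ j, s j * Real.log (mu j)) - (∑ i, w i * Real.log (lam i)) ≤ 0 := by
    refine le_of_tendsto hzero ?_
    filter_upwards [self_mem_nhdsWithin] with T hT
    exact hneg T hT
  linarith

end GSCScalar

noncomputable section GSCHerm
variable {ι : Type*} [Fintype ι] [DecidableEq ι]


private lemma gsc_unitary_facts {A : Matrix ι ι ℂ} (hA : A.IsHermitian) :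
    (hA.eigenvectorUnitary : Matrix ι ι ℂ) * (hA.eigenvectorUnitary : Matrix ι ι ℂ)ᴴ = 1 ∧
    (hA.eigenvectorUnitary : Matrix ι ι ℂ)ᴴ * (hA.eigenvectorUnitary : Matrix ι ι ℂ) = 1 := by
  constructor
  · simpa [Matrix.star_eq_conjTranspose] using
      (Matrix.mem_unitaryGroup_iff).mp hA.eigenvectorUnitary.2
  · simpa [Matrix.star_eq_conjTranspose] using
      (Matrix.mem_unitaryGroup_iff').mp hA.eigenvectorUnitary.2

private lemma gsc_spectral {A : Matrix ι ι ℂ} (hA : A.IsHermitian) :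
    A = (hA.eigenvectorUnitary : Matrix ι ι ℂ) *
        Matrix.diagonal (fun i => (hA.eigenvalues i : ℂ)) *
        (hA.eigenvectorUnitary : Matrix ι ι ℂ)ᴴ := by
  simpa [Matrix.star_eq_conjTranspose, Function.comp_def] using hA.spectral_theorem

/-- `hermFun` can be computed from any unitary diagonalization. -/
private lemma gsc_hermFun_eq (f : ℝ → ℂ) {A V : Matrix ι ι ℂ} (γ : ι → ℝ)
    (hV1 : V * Vᴴ = 1) (hV2 : Vᴴ * V = 1)
    (hAV : A = V * Matrix.diagonal (fun i => (γ i : ℂ)) * Vᴴ) :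
    hermFun f A = V * Matrix.diagonal (fun i => f (γ i)) * Vᴴ := by
  have hA : A.IsHermitian := by
    rw [hAV]
    apply Matrix.isHermitian_mul_mul_conjTranspose
    rw [Matrix.IsHermitian, Matrix.diagonal_conjTranspose]
    refine congrArg _ (funext fun i => ?_)
    simp only [Pi.star_apply, Complex.star_def, Complex.conj_ofReal]
  set U := (hA.eigenvectorUnitary : Matrix ι ι ℂ) with hUdef
  obtain ⟨hU1, hU2⟩ := gsc_unitary_facts hA
  have hspec := gsc_spectral hA
  have hkey : Matrix.diagonal (fun i => (hA.eigenvalues i : ℂ)) * (Uᴴ * V)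
      = (Uᴴ * V) * Matrix.diagonal (fun i => (γ i : ℂ)) := by
    have h := hspec.symm.trans hAV
    calc Matrix.diagonal (fun i => (hA.eigenvalues i : ℂ)) * (Uᴴ * V)
        = Uᴴ * (U * Matrix.diagonal (fun i => (hA.eigenvalues i : ℂ)) * Uᴴ) * V := by
          simp only [Matrix.mul_assoc, ← hUdef]
          rw [← Matrix.mul_assoc Uᴴ U, hU2, Matrix.one_mul]
      _ = Uᴴ * (V * Matrix.diagonal (fun i => (γ i : ℂ)) * Vᴴ) * V := by rw [h]
      _ = (Uᴴ * V) * Matrix.diagonal (fun i => (γ i : ℂ)) := by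
          simp only [Matrix.mul_assoc]
          rw [hV2, Matrix.mul_one]
  have hkey2 : Matrix.diagonal (fun i => f (hA.eigenvalues i)) * (Uᴴ * V)
      = (Uᴴ * V) * Matrix.diagonal (fun i => f (γ i)) := by
    ext i j
    have h1 := congrFun (congrFun hkey i) j
    simp only [Matrix.diagonal_mul, Matrix.mul_diagonal] at h1 ⊢
    rcases eq_or_ne ((Uᴴ * V) i j) 0 with h0 | h0
    · simp [h0]
    · have hval : (hA.eigenvalues i : ℂ) = (γ j : ℂ) := by
        have := h1
        rw [mul_comm ((Uᴴ * V) i j) ((γ j : ℂ))] at this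
        exact mul_right_cancel₀ h0 this
      have : hA.eigenvalues i = γ j := by exact_mod_cast hval
      rw [this, mul_comm]
  have : hermFun f A = U * Matrix.diagonal (fun i => f (hA.eigenvalues i)) * Uᴴ := by
    rw [hermFun, dif_pos hA, Matrix.star_eq_conjTranspose]
  rw [this]
  calc U * Matrix.diagonal (fun i => f (hA.eigenvalues i)) * Uᴴ
      = U * Matrix.diagonal (fun i => f (hA.eigenvalues i)) * Uᴴ * (V * Vᴴ) := by
        rw [hV1, Matrix.mul_one]
    _ = U * (Matrix.diagonal (fun i => f (hA.eigenvalues i)) * (Uᴴ * V)) * Vᴴ := by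
        simp only [Matrix.mul_assoc]
    _ = U * ((Uᴴ * V) * Matrix.diagonal (fun i => f (γ i))) * Vᴴ := by rw [hkey2]
    _ = (U * Uᴴ) * (V * Matrix.diagonal (fun i => f (γ i)) * Vᴴ) := by
        simp only [Matrix.mul_assoc]
    _ = V * Matrix.diagonal (fun i => f (γ i)) * Vᴴ := by rw [hU1, Matrix.one_mul]

/-- Trace formula against a `V diag Vᴴ` decomposition. -/
private lemma gsc_trace_formula (M V : Matrix ι ι ℂ) (g : ι → ℝ) :
    ((M * (V * Matrix.diagonal (fun i => (g i : ℂ)) * Vᴴ)).trace).re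
      = ∑ i, g i * ((Vᴴ * M * V) i i).re := by
  have h1 : (M * (V * Matrix.diagonal (fun i => (g i : ℂ)) * Vᴴ)).trace
      = ((Vᴴ * M * V) * Matrix.diagonal (fun i => (g i : ℂ))).trace := by
    rw [show M * (V * Matrix.diagonal (fun i => (g i : ℂ)) * Vᴴ)
        = (M * V * Matrix.diagonal (fun i => (g i : ℂ))) * Vᴴ by simp only [Matrix.mul_assoc]]
    rw [Matrix.trace_mul_comm]
    simp only [Matrix.mul_assoc]
  rw [h1]
  rw [Matrix.trace]
  simp only [Matrix.diag_apply, Matrix.mul_diagonal, Complex.re_sum]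
  refine Finset.sum_congr rfl fun i _ => ?_
  simp [mul_comm]

private lemma gsc_mulVec_col_eq {A V : Matrix ι ι ℂ} {γ : ι → ℝ}
    (h : A * V = V * Matrix.diagonal (fun i => (γ i : ℂ))) (j : ι) :
    A *ᵥ (fun a => V a j) = fun a => (γ j : ℂ) * V a j := by
  funext a
  have h1 := congrFun (congrFun h a) j
  simp only [Matrix.mul_diagonal] at h1
  calc (A *ᵥ fun b => V b j) a = (A * V) a j := by
        simp [Matrix.mulVec, Matrix.mul_apply, dotProduct]
    _ = (γ j : ℂ) * V a j := by rw [h1, mul_comm]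

private lemma gsc_diag_entry_eq (M V : Matrix ι ι ℂ) (i : ι) :
    (Vᴴ * M * V) i i = dotProduct (star (fun a => V a i)) (M *ᵥ (fun a => V a i)) := by
  simp [Matrix.mul_apply, Matrix.conjTranspose_apply, dotProduct, Matrix.mulVec,
    Finset.mul_sum, Finset.sum_mul]
  rw [Finset.sum_comm]
  refine Finset.sum_congr rfl fun a _ => Finset.sum_congr rfl fun b _ => by ring


end GSCHerm

namespace Cloning


variable {d k n : ℕ}

def glue (hkn : k ≤ n) (a : Fin k → Fin d) (z : Fin (n - k) → Fin d) : Fin n → Fin d :=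
  fun i => if h' : (i : ℕ) < k then a ⟨i, h'⟩ else z ⟨(i : ℕ) - k, by have := i.isLt; omega⟩

def hd (hkn : k ≤ n) (f : Fin n → Fin d) : Fin k → Fin d := fun i => f (Fin.castLE hkn i)

def tl (hkn : k ≤ n) (f : Fin n → Fin d) : Fin (n - k) → Fin d :=
  fun j => f ⟨k + (j : ℕ), by have := j.isLt; omega⟩

variable (hkn : k ≤ n)

lemma hd_glue (a : Fin k → Fin d) (z : Fin (n - k) → Fin d) : hd hkn (glue hkn a z) = a := by
  funext i
  simp only [hd, glue, Fin.coe_castLE]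
  rw [dif_pos i.isLt]

lemma tl_glue (a : Fin k → Fin d) (z : Fin (n - k) → Fin d) : tl hkn (glue hkn a z) = z := by
  funext j
  simp only [tl, glue]
  rw [dif_neg (by simp)]
  congr 1
  ext
  simp

lemma glue_hd_tl (f : Fin n → Fin d) : glue hkn (hd hkn f) (tl hkn f) = f := by
  funext i
  simp only [glue, hd, tl]
  by_cases h' : (i : ℕ) < k
  · rw [dif_pos h']
    exact congrArg f (by ext; simp)
  · rw [dif_neg h']
    refine congrArg f (Fin.ext ?_)
    simp only []
    omega

/-- The splitting equivalence. -/
def splitEquiv : (Fin n → Fin d) ≃ (Fin k → Fin d) × (Fin (n - k) → Fin d) where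
  toFun f := (hd hkn f, tl hkn f)
  invFun p := glue hkn p.1 p.2
  left_inv f := glue_hd_tl hkn f
  right_inv p := by simp [hd_glue, tl_glue]

lemma sum_split {M : Type*} [AddCommMonoid M] (F : (Fin n → Fin d) → M) :
    ∑ f : Fin n → Fin d, F f
      = ∑ a : Fin k → Fin d, ∑ z : Fin (n - k) → Fin d, F (glue hkn a z) := by
  rw [← (splitEquiv (d := d) hkn).symm.sum_comp F]
  rw [Fintype.sum_prod_type]
  rfl

lemma ptraceLast_apply (ρ : Matrix (Fin n → Fin d) (Fin n → Fin d) ℂ) (a b : Fin k → Fin d) :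
    ptraceLast hkn ρ a b = ∑ z : Fin (n - k) → Fin d, ρ (glue hkn a z) (glue hkn b z) := rfl

lemma tail_cond_iff (f g : Fin n → Fin d) :
    (∀ i : Fin n, k ≤ (i : ℕ) → f i = g i) ↔ tl hkn f = tl hkn g := by
  constructor
  · intro h
    funext j
    exact h _ (by simp)
  · intro h i hi
    have h1 : f i = tl hkn f ⟨(i : ℕ) - k, by have := i.isLt; omega⟩ := by
      simp only [tl]
      congr 1
      ext
      simp only []
      omega
    have h2 : g i = tl hkn g ⟨(i : ℕ) - k, by have := i.isLt; omega⟩ := by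
      simp only [tl]
      congr 1
      ext
      simp only []
      omega
    rw [h1, h2, h]

lemma extendId_apply (M : Matrix (Fin k → Fin d) (Fin k → Fin d) ℂ) (f g : Fin n → Fin d) :
    extendId hkn M f g = (if tl hkn f = tl hkn g then 1 else 0) * M (hd hkn f) (hd hkn g) := by
  rw [extendId]
  congr 1
  simp [tail_cond_iff hkn f g]

lemma eq_iff_hd_tl (f g : Fin n → Fin d) :
    f = g ↔ hd hkn f = hd hkn g ∧ tl hkn f = tl hkn g := by
  constructor
  · rintro rfl; exact ⟨rfl, rfl⟩
  · rintro ⟨h1, h2⟩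
    rw [← glue_hd_tl hkn f, ← glue_hd_tl hkn g, h1, h2]

lemma extendId_mul (M N : Matrix (Fin k → Fin d) (Fin k → Fin d) ℂ) :
    extendId hkn M * extendId hkn N = extendId hkn (M * N) := by
  ext f g
  rw [Matrix.mul_apply, sum_split hkn, extendId_apply]
  rw [Finset.sum_comm]
  rw [Finset.sum_eq_single (tl hkn f)]
  · rw [Matrix.mul_apply, Finset.mul_sum]
    refine Finset.sum_congr rfl fun b _ => ?_
    rw [extendId_apply, extendId_apply, hd_glue, tl_glue]
    by_cases hfg : tl hkn f = tl hkn g <;> simp [hfg, mul_assoc]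
  · intro z _ hz
    apply Finset.sum_eq_zero
    intro b _
    rw [extendId_apply, tl_glue]
    simp [Ne.symm hz]
  · simp

lemma extendId_one : extendId (d := d) hkn 1 = 1 := by
  ext f g
  rw [extendId_apply]
  rw [Matrix.one_apply, Matrix.one_apply]
  by_cases h1 : hd hkn f = hd hkn g <;> by_cases h2 : tl hkn f = tl hkn g <;>
    simp [h1, h2, eq_iff_hd_tl hkn f g]

lemma extendId_conjTranspose (M : Matrix (Fin k → Fin d) (Fin k → Fin d) ℂ) :
    (extendId hkn M)ᴴ = extendId hkn Mᴴ := by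
  ext f g
  rw [Matrix.conjTranspose_apply, extendId_apply, extendId_apply hkn _ f g]
  rw [Matrix.conjTranspose_apply]
  by_cases h : tl hkn f = tl hkn g
  · rw [if_pos h, if_pos h.symm]
    simp
  · rw [if_neg h, if_neg (fun hc => h hc.symm)]
    simp

lemma extendId_smul (c : ℂ) (M : Matrix (Fin k → Fin d) (Fin k → Fin d) ℂ) :
    extendId hkn (c • M) = c • extendId hkn M := by
  ext f g
  rw [Matrix.smul_apply, extendId_apply, extendId_apply]
  simp only [Matrix.smul_apply, smul_eq_mul]
  ring

lemma extendId_diagonal (v : (Fin k → Fin d) → ℂ) :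
    extendId hkn (Matrix.diagonal v) = Matrix.diagonal (fun f => v (hd hkn f)) := by
  ext f g
  rw [extendId_apply]
  by_cases h : f = g
  · subst h; simp [Matrix.diagonal_apply_eq]
  · rw [Matrix.diagonal_apply_ne _ h]
    rw [eq_iff_hd_tl hkn] at h
    rcases Decidable.not_and_iff_or_not.mp h with h1 | h1
    · rw [Matrix.diagonal_apply_ne _ h1, mul_zero]
    · simp [h1]

lemma trace_mul_extendId (M : Matrix (Fin n → Fin d) (Fin n → Fin d) ℂ)
    (N : Matrix (Fin k → Fin d) (Fin k → Fin d) ℂ) :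
    (M * extendId hkn N).trace = (ptraceLast hkn M * N).trace := by
  rw [Matrix.trace, Matrix.trace]
  simp only [Matrix.diag_apply, Matrix.mul_apply, ptraceLast_apply]
  rw [sum_split hkn]
  have : ∀ a z, ∑ g : Fin n → Fin d, M (glue hkn a z) g * extendId hkn N g (glue hkn a z)
      = ∑ b : Fin k → Fin d, M (glue hkn a z) (glue hkn b z) * N b a := by
    intro a z
    rw [sum_split hkn]
    rw [Finset.sum_comm]
    rw [Finset.sum_eq_single z]
    · refine Finset.sum_congr rfl fun b _ => ?_
      rw [extendId_apply, tl_glue, tl_glue, hd_glue, hd_glue]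
      simp
    · intro z' _ hz'
      apply Finset.sum_eq_zero
      intro b _
      rw [extendId_apply, tl_glue, tl_glue]
      simp [hz']
    · simp
  calc ∑ a, ∑ z, ∑ g, M (glue hkn a z) g * extendId hkn N g (glue hkn a z)
      = ∑ a, ∑ z, ∑ b, M (glue hkn a z) (glue hkn b z) * N b a := by
        refine Finset.sum_congr rfl fun a _ => Finset.sum_congr rfl fun z _ => this a z
    _ = ∑ a, ∑ b, (∑ z, M (glue hkn a z) (glue hkn b z)) * N b a := by
        refine Finset.sum_congr rfl fun a _ => ?_
        rw [Finset.sum_comm]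
        refine Finset.sum_congr rfl fun b _ => ?_
        rw [Finset.sum_mul]

lemma trace_ptraceLast (M : Matrix (Fin n → Fin d) (Fin n → Fin d) ℂ) :
    (ptraceLast hkn M).trace = M.trace := by
  have := trace_mul_extendId hkn M 1
  rw [extendId_one hkn, Matrix.mul_one, Matrix.mul_one] at this
  exact this.symm

lemma ptraceLast_conjTranspose (M : Matrix (Fin n → Fin d) (Fin n → Fin d) ℂ) :
    (ptraceLast hkn M)ᴴ = ptraceLast hkn Mᴴ := by
  ext a b
  simp only [Matrix.conjTranspose_apply, ptraceLast_apply, star_sum]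

/-- The embedded vector `x ⊗ e_y`. -/
def emb (hkn : k ≤ n) (x : (Fin k → Fin d) → ℂ) (y : Fin (n - k) → Fin d) :
    (Fin n → Fin d) → ℂ :=
  fun f => if tl hkn f = y then x (hd hkn f) else 0

lemma dotProduct_extendId (M : Matrix (Fin k → Fin d) (Fin k → Fin d) ℂ)
    (v : (Fin n → Fin d) → ℂ) :
    dotProduct (star v) (extendId hkn M *ᵥ v)
      = ∑ z : Fin (n - k) → Fin d,
          dotProduct (star (fun a => v (glue hkn a z)))
            (M *ᵥ (fun a => v (glue hkn a z))) := by
  simp only [dotProduct, Matrix.mulVec, Pi.star_apply, dotProduct]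
  rw [sum_split hkn]
  rw [Finset.sum_comm]
  refine Finset.sum_congr rfl fun z _ => Finset.sum_congr rfl fun a _ => ?_
  rw [Finset.mul_sum, Finset.mul_sum, sum_split hkn]
  rw [Finset.sum_comm]
  rw [Finset.sum_eq_single z]
  · refine Finset.sum_congr rfl fun b _ => ?_
    rw [extendId_apply, tl_glue, tl_glue, hd_glue, hd_glue]
    simp
  · intro z' _ hz'
    apply Finset.sum_eq_zero
    intro b _
    rw [extendId_apply, tl_glue, tl_glue]
    simp [Ne.symm hz']
  · simp

lemma dotProduct_ptraceLast (ω : Matrix (Fin n → Fin d) (Fin n → Fin d) ℂ)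
    (x : (Fin k → Fin d) → ℂ) :
    dotProduct (star x) (ptraceLast hkn ω *ᵥ x)
      = ∑ y : Fin (n - k) → Fin d,
          dotProduct (star (emb hkn x y)) (ω *ᵥ (emb hkn x y)) := by
  have hrhs : ∀ y : Fin (n - k) → Fin d,
      dotProduct (star (emb hkn x y)) (ω *ᵥ (emb hkn x y))
        = ∑ a : Fin k → Fin d, ∑ b : Fin k → Fin d,
            star (x a) * ω (glue hkn a y) (glue hkn b y) * x b := by
    intro y
    simp only [dotProduct, Matrix.mulVec, Pi.star_apply, dotProduct]
    rw [sum_split hkn]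
    have inner : ∀ a z, star (emb hkn x y (glue hkn a z)) *
        (∑ g, ω (glue hkn a z) g * emb hkn x y g)
        = if z = y then ∑ b, star (x a) * ω (glue hkn a y) (glue hkn b y) * x b else 0 := by
      intro a z
      rw [sum_split hkn]
      simp only [emb, tl_glue, hd_glue]
      by_cases hz : z = y
      · subst hz
        simp only [if_pos rfl]
        rw [Finset.mul_sum]
        refine Finset.sum_congr rfl fun b _ => ?_
        rw [Finset.sum_eq_single z]
        · simp [mul_comm, mul_assoc, mul_left_comm]
        · intro z' _ hz'; simp [hz']
        · simp
      · simp [hz]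
    calc ∑ a, ∑ z, star (emb hkn x y (glue hkn a z)) *
            (∑ g, ω (glue hkn a z) g * emb hkn x y g)
        = ∑ a, ∑ z, if z = y then
            ∑ b, star (x a) * ω (glue hkn a y) (glue hkn b y) * x b else 0 := by
          exact Finset.sum_congr rfl fun a _ => Finset.sum_congr rfl fun z _ => inner a z
      _ = ∑ a, ∑ b, star (x a) * ω (glue hkn a y) (glue hkn b y) * x b := by
          refine Finset.sum_congr rfl fun a _ => ?_
          simp
  rw [Finset.sum_congr rfl fun y _ => hrhs y]
  simp only [dotProduct, Matrix.mulVec, Pi.star_apply, dotProduct,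
    ptraceLast_apply]
  rw [Finset.sum_comm]
  refine Finset.sum_congr rfl fun a _ => ?_
  rw [Finset.mul_sum]
  rw [Finset.sum_comm]
  refine Finset.sum_congr rfl fun b _ => ?_
  rw [Finset.sum_mul, Finset.mul_sum]
  refine Finset.sum_congr rfl fun y _ => ?_
  ring

lemma sum_emb (v : (Fin n → Fin d) → ℂ) (f : Fin n → Fin d) :
    v f = ∑ z : Fin (n - k) → Fin d, emb hkn (fun a => v (glue hkn a z)) z f := by
  rw [Finset.sum_eq_single (tl hkn f)]
  · simp [emb, glue_hd_tl]
  · intro z _ hz; simp [emb, Ne.symm hz]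
  · simp

end Cloning

noncomputable section GSCCompare
variable {ι : Type*} [Fintype ι] [DecidableEq ι]

private lemma gsc_trace_psd_re_nonneg {M : Matrix ι ι ℂ} (h : M.PosSemidef) :
    0 ≤ (M.trace).re := by
  rw [Matrix.trace, Complex.re_sum]
  refine Finset.sum_nonneg fun i _ => ?_
  have h2 := h.dotProduct_mulVec_nonneg (Pi.single i 1)
  have h3 : dotProduct (star (Pi.single i 1)) (M *ᵥ (Pi.single i 1)) = M i i := by
    simp only [dotProduct, Matrix.mulVec_single, Pi.star_apply, Pi.single_apply]
    rw [Finset.sum_eq_single i]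
    · simp
    · intro b _ hb
      simp [hb]
    · simp
  rw [h3] at h2
  exact (Complex.le_def.mp h2).1

private lemma gsc_trace_mul_psd_nonneg {M S : Matrix ι ι ℂ}
    (hM : M.PosSemidef) (hS : S.PosSemidef) : 0 ≤ ((M * S).trace).re := by
  obtain ⟨X, rfl⟩ : ∃ X : Matrix ι ι ℂ, M = Xᴴ * X := by
    open scoped MatrixOrder in
    obtain ⟨X, hX⟩ := CStarAlgebra.nonneg_iff_eq_star_mul_self.mp hM.nonneg
    exact ⟨X, hX⟩
  rw [(Matrix.trace_mul_cycle X S Xᴴ).symm]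
  exact gsc_trace_psd_re_nonneg (hS.mul_mul_conjTranspose_same X)

private lemma gsc_smul_one_diag (t : ℂ) :
    (t • (1 : Matrix ι ι ℂ)) = Matrix.diagonal (fun _ => t) := by
  ext i j
  by_cases h : i = j <;> simp [h, Matrix.one_apply, Matrix.diagonal]

private lemma gsc_resolvent_compare (P A ω RB RC : Matrix ι ι ℂ)
    (hP : P * P = P) (hPh : Pᴴ = P)
    (hA : A.PosSemidef) (hω : ω.PosSemidef) (hωP : ω * P = ω)
    (hRBh : RBᴴ = RB) (hRCh : RCᴴ = RC)
    (t : ℝ) (ht : 0 < t)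
    (hRB1 : RB * (A + (t:ℂ) • 1) = 1) (hRB2 : (A + (t:ℂ) • 1) * RB = 1)
    (hRC1 : RC * (P * A * P + (t:ℂ) • 1) = 1)
    (hRC2 : (P * A * P + (t:ℂ) • 1) * RC = 1) :
    ((ω * RC).trace).re ≤ ((ω * RB).trace).re := by
  have hPω : P * ω = ω := by
    have h := congrArg Matrix.conjTranspose hωP
    rwa [Matrix.conjTranspose_mul, hPh, hω.isHermitian.eq] at h
  set B := A + (t:ℂ) • 1 with hBdef
  set C := P * A * P + (t:ℂ) • 1 with hCdef
  have hBpsd : B.PosSemidef := by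
    refine hA.add ?_
    rw [gsc_smul_one_diag]
    refine Matrix.PosSemidef.diagonal fun i => ?_
    rw [Complex.le_def]
    refine ⟨by simpa using ht.le, by simp⟩
  have hCP : C * P = P * C := by
    rw [hCdef, Matrix.add_mul, Matrix.mul_add]
    rw [Matrix.smul_mul, Matrix.mul_smul, Matrix.one_mul, Matrix.mul_one]
    congr 1
    calc P * A * P * P = P * A * (P * P) := by simp only [Matrix.mul_assoc]
      _ = P * A * P := by rw [hP]
      _ = (P * P) * A * P := by rw [hP]
      _ = P * (P * A * P) := by simp only [Matrix.mul_assoc]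
  have hRCP : RC * P = P * RC := by
    calc RC * P = RC * P * (C * RC) := by rw [hRC2, Matrix.mul_one]
      _ = RC * (P * C) * RC := by simp only [Matrix.mul_assoc]
      _ = RC * (C * P) * RC := by rw [hCP]
      _ = (RC * C) * (P * RC) := by simp only [Matrix.mul_assoc]
      _ = P * RC := by rw [hRC1, Matrix.one_mul]
  set N := (RB - RC) * P with hNdef
  have hPBP : P * (B - C) * P = 0 := by
    rw [hBdef, hCdef]
    have h : A + (t:ℂ) • 1 - (P * A * P + (t:ℂ) • 1) = A - P * A * P := by abel
    rw [h, Matrix.mul_sub, Matrix.sub_mul]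
    rw [Matrix.mul_assoc P A P]
    rw [show P * (P * (A * P)) = P * (A * P) by
      rw [← Matrix.mul_assoc P P (A * P), hP]]
    rw [show P * (A * P) * P = P * (A * P) by simp only [Matrix.mul_assoc, hP]]
    abel
  have hfourth : P * RC * B * RC * P = P * RC * P := by
    have h0 : P * RC * (B - C) * RC * P = 0 := by
      calc P * RC * (B - C) * RC * P = P * RC * (B - C) * (RC * P) := by
            simp only [Matrix.mul_assoc]
        _ = P * RC * (B - C) * (P * RC) := by rw [hRCP]
        _ = (P * RC) * ((B - C) * (P * RC)) := by simp only [Matrix.mul_assoc]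
        _ = (RC * P) * ((B - C) * (P * RC)) := by rw [hRCP]
        _ = RC * (P * (B - C) * P) * RC := by simp only [Matrix.mul_assoc]
        _ = 0 := by rw [hPBP, Matrix.mul_zero, Matrix.zero_mul]
    have h1 : P * RC * B * RC * P - P * RC * C * RC * P = 0 := by
      rw [← h0]
      simp only [Matrix.mul_sub, Matrix.sub_mul]
    have h2 : P * RC * C * RC * P = P * RC * P := by
      rw [Matrix.mul_assoc (P * RC) C RC, hRC2, Matrix.mul_one]
    rw [← h2]
    exact sub_eq_zero.mp h1
  have hexp : Nᴴ * B * N = P * RB * P - P * RC * P := by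
    have hNH : Nᴴ = P * (RB - RC) := by
      rw [hNdef, Matrix.conjTranspose_mul, Matrix.conjTranspose_sub, hRBh, hRCh, hPh]
    rw [hNH, hNdef]
    have e1 : P * (RB - RC) * B * ((RB - RC) * P)
        = P * RB * B * RB * P - P * RB * B * RC * P
          - (P * RC * B * RB * P - P * RC * B * RC * P) := by
      simp only [Matrix.mul_sub, Matrix.sub_mul]
      simp only [Matrix.mul_assoc]
      abel
    rw [e1]
    have t1 : P * RB * B * RB * P = P * RB * P := by
      rw [Matrix.mul_assoc (P * RB) B RB, hRB2, Matrix.mul_one]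
    have t2 : P * RB * B * RC * P = P * RC * P := by
      rw [Matrix.mul_assoc P RB B, hRB1, Matrix.mul_one]
    have t3 : P * RC * B * RB * P = P * RC * P := by
      rw [Matrix.mul_assoc (P * RC) B RB, hRB2, Matrix.mul_one]
    rw [t1, t2, t3, hfourth]
    abel
  have habs : ∀ R : Matrix ι ι ℂ, (ω * (P * R * P)).trace = (ω * R).trace := by
    intro R
    calc (ω * (P * R * P)).trace = ((ω * P * R) * P).trace := by simp only [Matrix.mul_assoc]
      _ = (P * (ω * P * R)).trace := by rw [Matrix.trace_mul_comm]
      _ = ((P * ω) * P * R).trace := by simp only [Matrix.mul_assoc]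
      _ = (ω * P * R).trace := by rw [hPω]
      _ = (ω * R).trace := by rw [hωP]
  have hpsd : (Nᴴ * B * N).PosSemidef := hBpsd.conjTranspose_mul_mul_same N
  have hge := gsc_trace_mul_psd_nonneg hω hpsd
  rw [hexp] at hge
  rw [Matrix.mul_sub, Matrix.trace_sub, Complex.sub_re] at hge
  rw [habs RB, habs RC] at hge
  linarith

end GSCCompare

noncomputable section GSCMain

open Matrix

variable {ι : Type*} [Fintype ι] [DecidableEq ι]

private lemma gsc_diag_herm (γ : ι → ℝ) :
    (Matrix.diagonal (fun i => (γ i : ℂ)))ᴴ = Matrix.diagonal (fun i => (γ i : ℂ)) := by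
  rw [Matrix.diagonal_conjTranspose]
  refine congrArg _ (funext fun i => ?_)
  simp only [Pi.star_apply, Complex.star_def, Complex.conj_ofReal]

private lemma gsc_vdv_herm (V : Matrix ι ι ℂ) (γ : ι → ℝ) :
    (V * Matrix.diagonal (fun i => (γ i : ℂ)) * Vᴴ)ᴴ
      = V * Matrix.diagonal (fun i => (γ i : ℂ)) * Vᴴ := by
  simp only [Matrix.conjTranspose_mul, Matrix.conjTranspose_conjTranspose, gsc_diag_herm,
    Matrix.mul_assoc]

private lemma gsc_ext_mulVec {A B : Matrix ι ι ℂ} (h : ∀ v, A *ᵥ v = B *ᵥ v) : A = B := by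
  ext i j
  have h1 := congrFun (h (Pi.single j 1)) i
  simpa [Matrix.mulVec_single] using h1

private lemma gsc_proj_absorb (P M : Matrix ι ι ℂ) (hP : P * P = P)
    (hr : LinearMap.range M.mulVecLin ≤ LinearMap.range P.mulVecLin) : P * M = M := by
  refine gsc_ext_mulVec fun v => ?_
  have hv : M *ᵥ v ∈ LinearMap.range P.mulVecLin := hr ⟨v, rfl⟩
  obtain ⟨u, hu⟩ := hv
  have hu' : P *ᵥ u = M *ᵥ v := hu
  calc (P * M) *ᵥ v = P *ᵥ (M *ᵥ v) := by rw [← Matrix.mulVec_mulVec]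
    _ = P *ᵥ (P *ᵥ u) := by rw [hu']
    _ = (P * P) *ᵥ u := by rw [Matrix.mulVec_mulVec]
    _ = P *ᵥ u := by rw [hP]
    _ = M *ᵥ v := hu'

private lemma gsc_proj_eq_zero {P : Matrix ι ι ℂ} (hP : P * P = P) (hPh : Pᴴ = P)
    (htr : P.trace = 0) : P = 0 := by
  have h2 : (Pᴴ * P).trace = 0 := by rw [hPh, hP, htr]
  have h3 : ∑ j, ∑ i, Complex.normSq (P i j) = 0 := by
    have h4 := congrArg Complex.re h2
    rw [Matrix.trace, Complex.re_sum] at h4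
    simp only [Matrix.diag_apply, Matrix.mul_apply, Matrix.conjTranspose_apply,
      Complex.re_sum] at h4
    rw [Complex.zero_re] at h4
    rw [← h4]
    refine Finset.sum_congr rfl fun j _ => Finset.sum_congr rfl fun i _ => ?_
    rw [Complex.star_def, ← Complex.normSq_eq_conj_mul_self]
    simp
  ext i j
  have h5 : ∀ j' ∈ Finset.univ, (0:ℝ) ≤ ∑ i, Complex.normSq (P i j') :=
    fun j' _ => Finset.sum_nonneg fun i _ => Complex.normSq_nonneg _
  have h6 := (Finset.sum_eq_zero_iff_of_nonneg h5).mp h3 j (Finset.mem_univ j)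
  have h7 := (Finset.sum_eq_zero_iff_of_nonneg
    (fun i _ => Complex.normSq_nonneg (P i j))).mp h6 i (Finset.mem_univ i)
  simpa using Complex.normSq_eq_zero.mp h7

private lemma gsc_resolvent {V S : Matrix ι ι ℂ} {g : ι → ℝ} (hg : ∀ i, 0 ≤ g i)
    (hV1 : V * Vᴴ = 1) (hV2 : Vᴴ * V = 1)
    (hS : S = V * Matrix.diagonal (fun i => (g i : ℂ)) * Vᴴ) (t : ℝ) (ht : 0 < t) :
    (S + (t : ℂ) • 1) * (V * Matrix.diagonal (fun i => ((1 / (g i + t) : ℝ) : ℂ)) * Vᴴ) = 1 ∧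
    (V * Matrix.diagonal (fun i => ((1 / (g i + t) : ℝ) : ℂ)) * Vᴴ) * (S + (t : ℂ) • 1) = 1 := by
  have hne : ∀ i, g i + t ≠ 0 := fun i => by have := hg i; positivity
  have h1 : S + (t : ℂ) • 1 = V * Matrix.diagonal (fun i => ((g i + t : ℝ) : ℂ)) * Vᴴ := by
    rw [hS]
    have h2 : (t : ℂ) • (1 : Matrix ι ι ℂ) = V * Matrix.diagonal (fun _ => (t:ℂ)) * Vᴴ := by
      rw [← gsc_smul_one_diag, Matrix.mul_smul, Matrix.mul_one, Matrix.smul_mul, hV1]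
    rw [h2, ← Matrix.add_mul, ← Matrix.mul_add, Matrix.diagonal_add]
    congr 2
    funext i
    push_cast
    ring
  have key : ∀ (a b : ι → ℝ), (∀ i, (a i : ℂ) * (b i : ℂ) = 1) →
      (V * Matrix.diagonal (fun i => (a i : ℂ)) * Vᴴ) *
        (V * Matrix.diagonal (fun i => (b i : ℂ)) * Vᴴ) = 1 := by
    intro a b hab
    calc (V * Matrix.diagonal (fun i => (a i : ℂ)) * Vᴴ) *
          (V * Matrix.diagonal (fun i => (b i : ℂ)) * Vᴴ)
        = V * (Matrix.diagonal (fun i => (a i : ℂ)) * (Vᴴ * V) *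
            Matrix.diagonal (fun i => (b i : ℂ))) * Vᴴ := by simp only [Matrix.mul_assoc]
      _ = V * (Matrix.diagonal (fun i => (a i : ℂ)) *
            Matrix.diagonal (fun i => (b i : ℂ))) * Vᴴ := by rw [hV2, Matrix.mul_one]
      _ = V * Vᴴ := by
            rw [Matrix.diagonal_mul_diagonal]
            have h3 : (fun i => (a i : ℂ) * (b i : ℂ)) = fun _ => (1:ℂ) := funext fun i => hab i
            rw [h3]
            simp
      _ = 1 := hV1
  refine ⟨?_, ?_⟩
  · rw [h1]
    refine key _ _ fun i => ?_
    rw [← Complex.ofReal_mul, mul_one_div_cancel (hne i)]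
    simp
  · rw [h1]
    refine key _ _ fun i => ?_
    rw [← Complex.ofReal_mul, one_div_mul_cancel (hne i)]
    simp

/-- `matLog` of a scaled projection. -/
private lemma gsc_matLog_proj (P : Matrix ι ι ℂ) (hP : P * P = P) (hPh : Pᴴ = P)
    (c : ℝ) (hc : 0 < c) :
    matLog ((c : ℂ)⁻¹ • P) = ((-(Real.log c) : ℝ) : ℂ) • P := by
  have hPherm : P.IsHermitian := hPh
  obtain ⟨hU1, hU2⟩ := gsc_unitary_facts hPherm
  set U := (hPherm.eigenvectorUnitary : Matrix ι ι ℂ) with hUdef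
  set γ := hPherm.eigenvalues with hγdef
  have hspec := gsc_spectral hPherm
  have hD : Matrix.diagonal (fun i => (γ i : ℂ)) * Matrix.diagonal (fun i => (γ i : ℂ))
      = Matrix.diagonal (fun i => (γ i : ℂ)) := by
    have h1 : (U * Matrix.diagonal (fun i => (γ i : ℂ)) * Uᴴ) *
        (U * Matrix.diagonal (fun i => (γ i : ℂ)) * Uᴴ)
        = U * Matrix.diagonal (fun i => (γ i : ℂ)) * Uᴴ := by rw [← hspec]; exact hP
    have h2 : U * (Matrix.diagonal (fun i => (γ i : ℂ)) * Matrix.diagonal (fun i => (γ i : ℂ)))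
        * Uᴴ = U * Matrix.diagonal (fun i => (γ i : ℂ)) * Uᴴ := by
      rw [← h1]
      calc U * (Matrix.diagonal (fun i => (γ i : ℂ)) * Matrix.diagonal (fun i => (γ i : ℂ))) * Uᴴ
          = U * (Matrix.diagonal (fun i => (γ i : ℂ)) * (Uᴴ * U) *
              Matrix.diagonal (fun i => (γ i : ℂ))) * Uᴴ := by rw [hU2, Matrix.mul_one]
        _ = (U * Matrix.diagonal (fun i => (γ i : ℂ)) * Uᴴ) *
              (U * Matrix.diagonal (fun i => (γ i : ℂ)) * Uᴴ) := by
            simp only [Matrix.mul_assoc]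
    have h3 := congrArg (fun M => Uᴴ * M * U) h2
    calc Matrix.diagonal (fun i => (γ i : ℂ)) * Matrix.diagonal (fun i => (γ i : ℂ))
        = (Uᴴ * U) * (Matrix.diagonal (fun i => (γ i : ℂ)) * Matrix.diagonal (fun i => (γ i : ℂ)))
            * (Uᴴ * U) := by rw [hU2, Matrix.one_mul, Matrix.mul_one]
      _ = Uᴴ * (U * (Matrix.diagonal (fun i => (γ i : ℂ)) *
            Matrix.diagonal (fun i => (γ i : ℂ))) * Uᴴ) * U := by simp only [Matrix.mul_assoc]
      _ = Uᴴ * (U * Matrix.diagonal (fun i => (γ i : ℂ)) * Uᴴ) * U := by rw [h2]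
      _ = (Uᴴ * U) * Matrix.diagonal (fun i => (γ i : ℂ)) * (Uᴴ * U) := by
            simp only [Matrix.mul_assoc]
      _ = Matrix.diagonal (fun i => (γ i : ℂ)) := by rw [hU2, Matrix.one_mul, Matrix.mul_one]
  have hγ01 : ∀ i, γ i = 0 ∨ γ i = 1 := by
    intro i
    have h4 := congrFun (congrFun hD i) i
    rw [Matrix.diagonal_mul_diagonal] at h4
    simp only [Matrix.diagonal_apply_eq] at h4
    have h5 : (γ i : ℂ) * (γ i : ℂ) = (γ i : ℂ) := h4
    rw [← Complex.ofReal_mul] at h5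
    have h6 : γ i * γ i = γ i := by exact_mod_cast h5
    have h7 : γ i * (γ i - 1) = 0 := by ring_nf; linarith [h6]
    rcases mul_eq_zero.mp h7 with h | h
    · exact Or.inl h
    · exact Or.inr (by linarith)
  have hsmul : (c : ℂ)⁻¹ • P = U * Matrix.diagonal (fun i => ((c⁻¹ * γ i : ℝ) : ℂ)) * Uᴴ := by
    rw [hspec, ← Matrix.smul_mul, ← Matrix.mul_smul]
    congr 2
    ext i j
    rcases eq_or_ne i j with rfl | hij
    · simp only [Matrix.smul_apply, Matrix.diagonal_apply_eq, smul_eq_mul]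
      push_cast
      ring
    · simp [Matrix.diagonal_apply_ne _ hij, hij]
  have hlog : matLog ((c : ℂ)⁻¹ • P)
      = U * Matrix.diagonal (fun i => ((Real.log (c⁻¹ * γ i) : ℝ) : ℂ)) * Uᴴ := by
    rw [matLog]
    exact gsc_hermFun_eq _ _ hU1 hU2 hsmul
  rw [hlog]
  have hval : (fun i => ((Real.log (c⁻¹ * γ i) : ℝ) : ℂ))
      = fun i => ((-(Real.log c)) : ℂ) * (γ i : ℂ) := by
    funext i
    rcases hγ01 i with h | h
    · simp [h]
    · rw [h, mul_one, Real.log_inv]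
      push_cast
      ring
  rw [hval]
  have hdsmul : Matrix.diagonal (fun i => ((-(Real.log c)) : ℂ) * (γ i : ℂ))
      = ((-(Real.log c) : ℝ) : ℂ) • Matrix.diagonal (fun i => (γ i : ℂ)) := by
    ext i j
    rcases eq_or_ne i j with rfl | hij
    · simp
    · simp [Matrix.diagonal_apply_ne _ hij]
  rw [hdsmul, Matrix.mul_smul, Matrix.smul_mul, ← hspec]

private lemma gsc_relEnt_expand (ρ σ : Matrix ι ι ℂ) :
    relEnt ρ σ = ((ρ * matLog ρ).trace).re - ((ρ * matLog σ).trace).re := by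
  rw [relEnt, Matrix.mul_sub, Matrix.trace_sub, Complex.sub_re]

end GSCMain

noncomputable section GSCBig

open Matrix Cloning

variable {d k n : ℕ}

private lemma gsc_ptrace_psd (hkn : k ≤ n) (ω : Matrix (Fin n → Fin d) (Fin n → Fin d) ℂ)
    (hω : ω.PosSemidef) : (ptraceLast hkn ω).PosSemidef := by
  refine Matrix.PosSemidef.of_dotProduct_mulVec_nonneg ?_ ?_
  · rw [Matrix.IsHermitian, Cloning.ptraceLast_conjTranspose, hω.isHermitian.eq]
  · intro x
    rw [Cloning.dotProduct_ptraceLast]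
    exact Finset.sum_nonneg fun y _ => hω.dotProduct_mulVec_nonneg _

private lemma gsc_extendId_psd (hkn : k ≤ n) (ρ : Matrix (Fin k → Fin d) (Fin k → Fin d) ℂ)
    (hρ : ρ.PosSemidef) : (extendId hkn ρ).PosSemidef := by
  refine Matrix.PosSemidef.of_dotProduct_mulVec_nonneg ?_ ?_
  · rw [Matrix.IsHermitian, Cloning.extendId_conjTranspose, hρ.isHermitian.eq]
  · intro v
    rw [Cloning.dotProduct_extendId]
    exact Finset.sum_nonneg fun z _ => hρ.dotProduct_mulVec_nonneg _

private lemma gsc_kernel (hkn : k ≤ n) (ω : Matrix (Fin n → Fin d) (Fin n → Fin d) ℂ)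
    (hω : ω.PosSemidef) (v : (Fin n → Fin d) → ℂ)
    (hv : dotProduct (star v) ((extendId hkn (ptraceLast hkn ω)) *ᵥ v) = 0) :
    ω *ᵥ v = 0 := by
  have hρ0 : (ptraceLast hkn ω).PosSemidef := gsc_ptrace_psd hkn ω hω
  rw [Cloning.dotProduct_extendId] at hv
  have hz : ∀ z, dotProduct (star (fun a => v (glue hkn a z)))
      ((ptraceLast hkn ω) *ᵥ (fun a => v (glue hkn a z))) = 0 := by
    intro z
    exact (Finset.sum_eq_zero_iff_of_nonneg (fun z' _ => hρ0.dotProduct_mulVec_nonneg _)).mp hv z (Finset.mem_univ z)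
  have hemb : ∀ z y, ω *ᵥ Cloning.emb hkn (fun a => v (glue hkn a z)) y = 0 := by
    intro z y
    have h1 := hz z
    rw [Cloning.dotProduct_ptraceLast] at h1
    have h2 := (Finset.sum_eq_zero_iff_of_nonneg (fun y' _ => hω.dotProduct_mulVec_nonneg _)).mp h1 y (Finset.mem_univ y)
    exact (hω.dotProduct_mulVec_zero_iff _).mp h2
  have hdecomp : v = ∑ z, Cloning.emb hkn (fun a => v (glue hkn a z)) z := by
    funext f
    rw [Finset.sum_apply]
    exact Cloning.sum_emb hkn v f
  calc ω *ᵥ v = ω.mulVecLin v := rfl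
    _ = ω.mulVecLin (∑ z, Cloning.emb hkn (fun a => v (glue hkn a z)) z) := by rw [← hdecomp]
    _ = ∑ z, ω.mulVecLin (Cloning.emb hkn (fun a => v (glue hkn a z)) z) := map_sum _ _ _
    _ = 0 := by
        refine Finset.sum_eq_zero fun z _ => ?_
        rw [Matrix.mulVecLin_apply]
        exact hemb z z

/-- The key inequality. -/
private lemma gsc_main (hkn : k ≤ n)
    (PX ω : Matrix (Fin n → Fin d) (Fin n → Fin d) ℂ)
    (hPX : PX * PX = PX) (hPXh : PXᴴ = PX)
    (hωpsd : ω.PosSemidef) (hωtr : ω.trace = 1)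
    (hPXω : PX * ω = ω) (hωPX : ω * PX = ω)
    (c : ℝ) (hc : 0 < c) :
    ((ptraceLast hkn ω * matLog (ptraceLast hkn ω)).trace).re + Real.log c
      ≤ ((ω * matLog ((c : ℂ) • (PX * extendId hkn (ptraceLast hkn ω) * PX))).trace).re := by
  classical
  set ρ0 := ptraceLast hkn ω with hρ0def
  have hρ0psd : ρ0.PosSemidef := gsc_ptrace_psd hkn ω hωpsd
  have hρ0h : ρ0.IsHermitian := hρ0psd.isHermitian
  obtain ⟨hW1, hW2⟩ := gsc_unitary_facts hρ0h
  set W := (hρ0h.eigenvectorUnitary : Matrix (Fin k → Fin d) (Fin k → Fin d) ℂ) with hWdef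
  set ν := hρ0h.eigenvalues with hνdef
  set V := extendId hkn W with hVdef
  have hV1 : V * Vᴴ = 1 := by
    rw [hVdef, Cloning.extendId_conjTranspose, Cloning.extendId_mul, hW1,
      Cloning.extendId_one]
  have hV2 : Vᴴ * V = 1 := by
    rw [hVdef, Cloning.extendId_conjTranspose, Cloning.extendId_mul, hW2,
      Cloning.extendId_one]
  set A := extendId hkn ρ0 with hAdef
  have hAdiag : A = V * Matrix.diagonal (fun J => ((ν (Cloning.hd hkn J)) : ℂ)) * Vᴴ := by
    have h1 : ρ0 = W * Matrix.diagonal (fun i => ((ν i) : ℂ)) * Wᴴ := gsc_spectral hρ0h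
    rw [hAdef, h1, ← Cloning.extendId_mul, ← Cloning.extendId_mul,
      Cloning.extendId_diagonal, ← Cloning.extendId_conjTranspose, ← hVdef]
  have hApsd : A.PosSemidef := gsc_extendId_psd hkn ρ0 hρ0psd
  set σ0 := PX * A * PX with hσ0def
  have hσ0psd : σ0.PosSemidef := by
    have h := hApsd.mul_mul_conjTranspose_same PX
    rw [hPXh] at h
    rw [hσ0def]
    exact h
  have hσ0h : σ0.IsHermitian := hσ0psd.isHermitian
  obtain ⟨hU1, hU2⟩ := gsc_unitary_facts hσ0h
  set U := (hσ0h.eigenvectorUnitary : Matrix (Fin n → Fin d) (Fin n → Fin d) ℂ) with hUdef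
  set lam := hσ0h.eigenvalues with hlamdef
  set w : (Fin n → Fin d) → ℝ := fun i => ((Uᴴ * ω * U) i i).re with hwdef
  set s : (Fin n → Fin d) → ℝ := fun J => ((Vᴴ * ω * V) J J).re with hsdef
  have hker : ∀ v, dotProduct (star v) (A *ᵥ v) = 0 → ω *ᵥ v = 0 := by
    intro v hv
    exact gsc_kernel hkn ω hωpsd v hv
  have hUcol : ∀ i, σ0 *ᵥ (fun a => U a i) = fun a => (lam i : ℂ) * U a i := by
    refine fun i => gsc_mulVec_col_eq ?_ i
    calc σ0 * U = U * Matrix.diagonal (fun i => (lam i : ℂ)) * (Uᴴ * U) := by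
          rw [gsc_spectral hσ0h]
          simp only [Matrix.mul_assoc]
          rfl
      _ = U * Matrix.diagonal (fun i => (lam i : ℂ)) := by rw [hU2, Matrix.mul_one]
  have hVcol : ∀ J, A *ᵥ (fun a => V a J) = fun a => (ν (Cloning.hd hkn J) : ℂ) * V a J := by
    refine fun J => gsc_mulVec_col_eq (γ := fun J => ν (Cloning.hd hkn J)) ?_ J
    calc A * V = V * Matrix.diagonal (fun J => (ν (Cloning.hd hkn J) : ℂ)) * (Vᴴ * V) := by
          rw [hAdiag]
          simp only [Matrix.mul_assoc]
      _ = V * Matrix.diagonal (fun J => (ν (Cloning.hd hkn J) : ℂ)) := by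
          rw [hV2, Matrix.mul_one]
  have hlam0 : ∀ i, lam i = 0 → w i = 0 := by
    intro i h0
    have h1 : σ0 *ᵥ (fun a => U a i) = 0 := by
      rw [hUcol i]
      funext a
      rw [h0]
      simp
    have h2 : dotProduct (star (PX *ᵥ (fun a => U a i)))
        (A *ᵥ (PX *ᵥ (fun a => U a i))) = 0 := by
      have h3 : dotProduct (star (fun a => U a i)) (σ0 *ᵥ (fun a => U a i)) = 0 := by
        rw [h1, dotProduct_zero]
      rw [← h3, hσ0def]
      rw [show (PX * A * PX) *ᵥ (fun a => U a i)
          = PX *ᵥ (A *ᵥ (PX *ᵥ (fun a => U a i))) by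
        rw [Matrix.mulVec_mulVec, Matrix.mulVec_mulVec]]
      rw [Matrix.dotProduct_mulVec (star (fun a => U a i)) PX]
      congr 1
      rw [Matrix.star_mulVec, hPXh]
    have h3 : ω *ᵥ (PX *ᵥ (fun a => U a i)) = 0 := hker _ h2
    have h4 : ω *ᵥ (fun a => U a i) = 0 := by
      conv_lhs => rw [← hωPX]
      rw [← Matrix.mulVec_mulVec]
      exact h3
    simp only [hwdef]
    rw [gsc_diag_entry_eq, h4, dotProduct_zero]
    simp
  have hmu0 : ∀ J, ν (Cloning.hd hkn J) = 0 → s J = 0 := by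
    intro J h0
    have h1 : A *ᵥ (fun a => V a J) = 0 := by
      rw [hVcol J]
      funext a
      rw [h0]
      simp
    have h2 : dotProduct (star (fun a => V a J)) (A *ᵥ (fun a => V a J)) = 0 := by
      rw [h1, dotProduct_zero]
    have h3 := hker _ h2
    simp only [hsdef]
    rw [gsc_diag_entry_eq, h3, dotProduct_zero]
    simp
  have htrsum : ∀ (T : Matrix (Fin n → Fin d) (Fin n → Fin d) ℂ),
      T * Tᴴ = 1 → ∑ i, ((Tᴴ * ω * T) i i).re = 1 := by
    intro T hT
    have h1 : (Tᴴ * ω * T).trace = ω.trace := by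
      rw [Matrix.trace_mul_cycle]
      rw [show T * Tᴴ * ω = ω by rw [hT, Matrix.one_mul]]
    have h2 : ∑ i, ((Tᴴ * ω * T) i i).re = ((Tᴴ * ω * T).trace).re := by
      rw [Matrix.trace, Complex.re_sum]
      rfl
    rw [h2, h1, hωtr]
    simp
  have hsumw : ∑ i, w i = 1 := htrsum U hU1
  have hsums : ∑ J, s J = 1 := htrsum V hV1
  have hcomp : ∀ t : ℝ, 0 < t →
      ∑ i, w i / (lam i + t) ≤ ∑ J, s J / (ν (Cloning.hd hkn J) + t) := by
    intro t ht
    obtain ⟨hc1, hc2⟩ := gsc_resolvent (fun i => hσ0psd.eigenvalues_nonneg i)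
      hU1 hU2 (gsc_spectral hσ0h) t ht
    obtain ⟨hb1, hb2⟩ := gsc_resolvent (fun J => hρ0psd.eigenvalues_nonneg _)
      hV1 hV2 hAdiag t ht
    have hcmp := gsc_resolvent_compare PX A ω
      (V * Matrix.diagonal (fun J => ((1 / (ν (Cloning.hd hkn J) + t) : ℝ) : ℂ)) * Vᴴ)
      (U * Matrix.diagonal (fun i => ((1 / (lam i + t) : ℝ) : ℂ)) * Uᴴ)
      hPX hPXh hApsd hωpsd hωPX (gsc_vdv_herm _ _) (gsc_vdv_herm _ _) t ht
      hb2 hb1 (by rw [← hσ0def]; exact hc2) (by rw [← hσ0def]; exact hc1)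
    rw [gsc_trace_formula ω U (fun i => 1 / (lam i + t)),
      gsc_trace_formula ω V (fun J => 1 / (ν (Cloning.hd hkn J) + t))] at hcmp
    calc ∑ i, w i / (lam i + t) = ∑ i, 1 / (lam i + t) * ((Uᴴ * ω * U) i i).re := by
          refine Finset.sum_congr rfl fun i _ => ?_
          simp only [hwdef]
          rw [one_div, mul_comm, div_eq_mul_inv]
      _ ≤ ∑ J, 1 / (ν (Cloning.hd hkn J) + t) * ((Vᴴ * ω * V) J J).re := hcmp
      _ = ∑ J, s J / (ν (Cloning.hd hkn J) + t) := by
          refine Finset.sum_congr rfl fun J _ => ?_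
          simp only [hsdef]
          rw [one_div, mul_comm, div_eq_mul_inv]
  have hKEY : ∑ J, s J * Real.log (ν (Cloning.hd hkn J)) ≤ ∑ i, w i * Real.log (lam i) :=
    gsc_scalar_key lam w (fun J => ν (Cloning.hd hkn J)) s
      (fun i => hσ0psd.eigenvalues_nonneg i) (fun J => hρ0psd.eigenvalues_nonneg _)
      hlam0 hmu0 (hsumw.trans hsums.symm) hcomp
  have hlogρ0 : matLog ρ0 = W * Matrix.diagonal (fun i => ((Real.log (ν i) : ℝ) : ℂ)) * Wᴴ := by
    rw [matLog]
    exact gsc_hermFun_eq _ _ hW1 hW2 (gsc_spectral hρ0h)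
  have hlogA : matLog A
      = V * Matrix.diagonal (fun J => ((Real.log (ν (Cloning.hd hkn J)) : ℝ) : ℂ)) * Vᴴ := by
    rw [matLog]
    exact gsc_hermFun_eq _ _ hV1 hV2 hAdiag
  have hEρ : ((ρ0 * matLog ρ0).trace).re = ((ω * matLog A).trace).re := by
    have h1 : matLog A = extendId hkn (matLog ρ0) := by
      rw [hlogA, hlogρ0, ← Cloning.extendId_mul, ← Cloning.extendId_mul,
        Cloning.extendId_diagonal, ← Cloning.extendId_conjTranspose, ← hVdef]
    rw [h1, Cloning.trace_mul_extendId hkn ω (matLog ρ0), ← hρ0def]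
  have hEρval : ((ω * matLog A).trace).re
      = ∑ J, Real.log (ν (Cloning.hd hkn J)) * s J := by
    rw [hlogA]
    exact gsc_trace_formula ω V _
  have hcσ : (c : ℂ) • σ0 = U * Matrix.diagonal (fun i => ((c * lam i : ℝ) : ℂ)) * Uᴴ := by
    rw [gsc_spectral hσ0h, ← Matrix.smul_mul, ← Matrix.mul_smul]
    congr 2
    ext i j
    rcases eq_or_ne i j with rfl | hij
    · simp only [Matrix.smul_apply, Matrix.diagonal_apply_eq, smul_eq_mul]
      push_cast
      ring
    · simp [Matrix.diagonal_apply_ne _ hij, hij]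
  have hRHS : ((ω * matLog ((c : ℂ) • σ0)).trace).re = ∑ i, Real.log (c * lam i) * w i := by
    rw [show matLog ((c : ℂ) • σ0)
        = U * Matrix.diagonal (fun i => ((Real.log (c * lam i) : ℝ) : ℂ)) * Uᴴ from by
      rw [matLog]; exact gsc_hermFun_eq _ _ hU1 hU2 hcσ]
    exact gsc_trace_formula ω U _
  have hsplit : ∑ i, Real.log (c * lam i) * w i
      = Real.log c * (∑ i, w i) + ∑ i, Real.log (lam i) * w i := by
    rw [Finset.mul_sum, ← Finset.sum_add_distrib]
    refine Finset.sum_congr rfl fun i _ => ?_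
    rcases eq_or_ne (lam i) 0 with h0 | h0
    · rw [hlam0 i h0]
      ring
    · rw [Real.log_mul hc.ne' h0]
      ring
  rw [hEρ, hEρval, hRHS, hsplit, hsumw]
  have h1 : ∑ J, Real.log (ν (Cloning.hd hkn J)) * s J
      = ∑ J, s J * Real.log (ν (Cloning.hd hkn J)) :=
    Finset.sum_congr rfl fun J _ => mul_comm _ _
  have h2 : ∑ i, Real.log (lam i) * w i = ∑ i, w i * Real.log (lam i) :=
    Finset.sum_congr rfl fun i _ => mul_comm _ _
  rw [h1, h2]
  linarith [hKEY]

end GSCBig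

/-- **Cloning between general subspaces.**
For subspaces `X_n ⊆ (ℂ^d)^{⊗n}` and `Y_k ⊆ (ℂ^d)^{⊗k}` given by orthogonal projections,
`D(ω‖π_{X_n}) ≥ D(P_{n→k}(ω)‖π_{Y_k}) + D(ω‖(C_{k→n}∘P_{n→k})(ω))`. -/
theorem general_subspace_cloning
    (d k n : ℕ) (hk : 1 ≤ k) (hkn : k ≤ n) (dX dY : ℕ)
    (PX : Matrix (Fin n → Fin d) (Fin n → Fin d) ℂ)
    (PY : Matrix (Fin k → Fin d) (Fin k → Fin d) ℂ)
    (hPX : PX * PX = PX) (hPXh : PXᴴ = PX) (hPXdim : PX.trace = (dX : ℂ))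
    (hPY : PY * PY = PY) (hPYh : PYᴴ = PY) (hPYdim : PY.trace = (dY : ℂ))
    (ω : Matrix (Fin n → Fin d) (Fin n → Fin d) ℂ) (hω : IsState ω)
    (hsuppX : LinearMap.range ω.mulVecLin ≤ LinearMap.range PX.mulVecLin)
    (hsuppY : LinearMap.range (ptraceLast hkn ω).mulVecLin ≤ LinearMap.range PY.mulVecLin) :
    relEnt ω (((dX : ℂ))⁻¹ • PX) ≥
      relEnt (genPTrace hkn PX PY ω) (((dY : ℂ))⁻¹ • PY) +
        relEnt ω (genClone hkn dX dY PX PY (genPTrace hkn PX PY ω)) := by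
  classical
  obtain ⟨hωpsd, hωtr⟩ := hω
  have hωherm : ω.IsHermitian := hωpsd.isHermitian
  have hPXω : PX * ω = ω := gsc_proj_absorb PX ω hPX hsuppX
  have hωPX : ω * PX = ω := by
    have h := congrArg Matrix.conjTranspose hPXω
    rwa [Matrix.conjTranspose_mul, hωherm.eq, hPXh] at h
  set ρ0 := ptraceLast hkn ω with hρ0def
  have hρ0psd : ρ0.PosSemidef := gsc_ptrace_psd hkn ω hωpsd
  have hρ0tr : ρ0.trace = 1 := by
    rw [hρ0def, Cloning.trace_ptraceLast, hωtr]
  have hPYρ0 : PY * ρ0 = ρ0 := gsc_proj_absorb PY ρ0 hPY hsuppY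
  have hρ0PY : ρ0 * PY = ρ0 := by
    have h := congrArg Matrix.conjTranspose hPYρ0
    rwa [Matrix.conjTranspose_mul, hρ0psd.isHermitian.eq, hPYh] at h
  have hPXωPX : PX * ω * PX = ω := by rw [hPXω, hωPX]
  have hgen : genPTrace hkn PX PY ω = ρ0 := by
    rw [genPTrace, hPXωPX, ← hρ0def, hPYρ0, hρ0PY]
  have hdX0 : (0:ℝ) < (dX : ℝ) := by
    rcases Nat.eq_zero_or_pos dX with h0 | h0
    · exfalso
      rw [h0] at hPXdim
      have hP0 : PX = 0 := gsc_proj_eq_zero hPX hPXh (by simpa using hPXdim)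
      have hω0 : ω = 0 := by rw [← hPXω, hP0, Matrix.zero_mul]
      rw [hω0] at hωtr
      simp at hωtr
    · exact_mod_cast h0
  have hdY0 : (0:ℝ) < (dY : ℝ) := by
    rcases Nat.eq_zero_or_pos dY with h0 | h0
    · exfalso
      rw [h0] at hPYdim
      have hP0 : PY = 0 := gsc_proj_eq_zero hPY hPYh (by simpa using hPYdim)
      have hρ00 : ρ0 = 0 := by rw [← hPYρ0, hP0, Matrix.zero_mul]
      rw [hρ00] at hρ0tr
      simp at hρ0tr
    · exact_mod_cast h0
  set c : ℝ := (dY : ℝ) / (dX : ℝ) with hcdef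
  have hc : 0 < c := div_pos hdY0 hdX0
  have hclone : genClone hkn dX dY PX PY ρ0
      = (c : ℂ) • (PX * extendId hkn ρ0 * PX) := by
    rw [genClone, hPYρ0, hρ0PY, hcdef]
    congr 1
    push_cast
    ring
  have hπX : matLog (((dX : ℂ))⁻¹ • PX) = ((-(Real.log dX) : ℝ) : ℂ) • PX := by
    have h := gsc_matLog_proj PX hPX hPXh (dX : ℝ) hdX0
    rw [show (((dX : ℝ)) : ℂ)⁻¹ = ((dX : ℂ))⁻¹ by push_cast; ring] at h
    exact h
  have hπY : matLog (((dY : ℂ))⁻¹ • PY) = ((-(Real.log dY) : ℝ) : ℂ) • PY := by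
    have h := gsc_matLog_proj PY hPY hPYh (dY : ℝ) hdY0
    rw [show (((dY : ℝ)) : ℂ)⁻¹ = ((dY : ℂ))⁻¹ by push_cast; ring] at h
    exact h
  rw [ge_iff_le, gsc_relEnt_expand, gsc_relEnt_expand, gsc_relEnt_expand, hgen, hclone,
    hπX, hπY]
  have hT1 : ((ω * (((-(Real.log dX) : ℝ) : ℂ) • PX)).trace).re = -(Real.log dX) := by
    rw [Matrix.mul_smul, hωPX, Matrix.trace_smul, hωtr]
    rw [smul_eq_mul, mul_one, Complex.ofReal_re]
  have hT2 : ((ρ0 * (((-(Real.log dY) : ℝ) : ℂ) • PY)).trace).re = -(Real.log dY) := by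
    rw [Matrix.mul_smul, hρ0PY, Matrix.trace_smul, hρ0tr]
    rw [smul_eq_mul, mul_one, Complex.ofReal_re]
  rw [hT1, hT2]
  have hmain := gsc_main hkn PX ω hPX hPXh hωpsd hωtr hPXω hωPX c hc
  rw [← hρ0def] at hmain
  have hlogc : Real.log c = Real.log dY - Real.log dX := by
    rw [hcdef]
    exact Real.log_div (ne_of_gt hdY0) (ne_of_gt hdX0)
  linarith
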